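/- Existence of a finite Markov basis (Diaconis–Sturmfels / Hilbert basis argument): for any integer matrix $A \in \mathbb{Z}^{d \times m}$, there exists a finite set $M \subseteq \ker_{\mathbb{Z}}(A) = \{z \in \mathbb{Z}^m : Az = 0\}$ such that for any two vectors $u, v \in \mathbb{Z}_{\ge 0}^m$ with $Au = Av$, there is a finite sequence $u = u_0, u_1, \dots, u_k = v$ with each $u_i \in \mathbb{Z}_{\ge 0}^m$ and each difference $u_{i+1} - u_i \in M \cup (-M)$. -/

import Mathlib

open Set

namespace Stmt11

variable {d m : ℕ}

/-- cast a natural vector to an integer vector -/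
def zc (x : Fin m → ℕ) : Fin m → ℤ := fun j => (x j : ℤ)

lemma zc_add (a b : Fin m → ℕ) : zc (a + b) = zc a + zc b := by
  funext j; simp [zc]

lemma zc_zero : zc (0 : Fin m → ℕ) = 0 := by funext j; simp [zc]

lemma zc_sub {a b : Fin m → ℕ} (h : b ≤ a) : zc (a - b) = zc a - zc b := by
  funext j
  simp [zc, Nat.cast_sub (h j)]

/-- the fiber monoid -/
def Sset (A : Matrix (Fin d) (Fin m) ℤ) : Set ((Fin m → ℕ) × (Fin m → ℕ)) :=
  {p | A.mulVec (zc p.1) = A.mulVec (zc p.2)}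

lemma mem_sub {A : Matrix (Fin d) (Fin m) ℤ} {p q : (Fin m → ℕ) × (Fin m → ℕ)}
    (hp : p ∈ Sset A) (hq : q ∈ Sset A) (h : q ≤ p) : p - q ∈ Sset A := by
  simp only [Sset, mem_setOf_eq] at *
  show A.mulVec (zc (p.1 - q.1)) = A.mulVec (zc (p.2 - q.2))
  rw [zc_sub h.1, zc_sub h.2, Matrix.mulVec_sub, Matrix.mulVec_sub, hp, hq]

/-- minimal nonzero elements of the fiber monoid -/
def MinS (A : Matrix (Fin d) (Fin m) ℤ) : Set ((Fin m → ℕ) × (Fin m → ℕ)) :=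
  {g | g ∈ Sset A ∧ g ≠ 0 ∧ ∀ t ∈ Sset A, t ≠ 0 → ¬ t < g}

lemma isPWO_pi (s : Set (Fin m → ℕ)) : s.IsPWO :=
  (Set.IsPWO.pi (fun _ : Fin m => Set.isPWO_of_wellQuasiOrderedLE (Set.univ : Set ℕ))).mono
    (fun x _ => Set.mem_univ_pi.2 fun _ => Set.mem_univ _)

lemma isPWO_all (s : Set ((Fin m → ℕ) × (Fin m → ℕ))) : s.IsPWO :=
  ((isPWO_pi (univ : Set (Fin m → ℕ))).prod (isPWO_pi univ)).mono
    (fun x _ => ⟨mem_univ _, mem_univ _⟩)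

lemma minS_finite (A : Matrix (Fin d) (Fin m) ℤ) : (MinS A).Finite := by
  have hanti : IsAntichain (· ≤ ·) (MinS A) := by
    intro a ha b hb hne hle
    exact hb.2.2 a ha.1 ha.2.1 (lt_of_le_of_ne hle hne)
  exact hanti.finite_of_partiallyWellOrderedOn (isPWO_all _)

/-- measure for induction -/
def mu (s : (Fin m → ℕ) × (Fin m → ℕ)) : ℕ := (∑ j, s.1 j) + (∑ j, s.2 j)

lemma mu_eq_zero {s : (Fin m → ℕ) × (Fin m → ℕ)} (h : mu s = 0) : s = 0 := by
  simp only [mu, Nat.add_eq_zero, Finset.sum_eq_zero_iff, Finset.mem_univ,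
    forall_true_left] at h
  ext j
  · exact h.1 j
  · exact h.2 j

lemma mu_sub_add {s g : (Fin m → ℕ) × (Fin m → ℕ)} (h : g ≤ s) :
    mu (s - g) + mu g = mu s := by
  simp only [mu]
  have e1 : (∑ j, (s - g).1 j) + ∑ j, g.1 j = ∑ j, s.1 j := by
    rw [← Finset.sum_add_distrib]
    exact Finset.sum_congr rfl fun j _ => Nat.sub_add_cancel (h.1 j)
  have e2 : (∑ j, (s - g).2 j) + ∑ j, g.2 j = ∑ j, s.2 j := by
    rw [← Finset.sum_add_distrib]
    exact Finset.sum_congr rfl fun j _ => Nat.sub_add_cancel (h.2 j)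
  omega

lemma decomp (A : Matrix (Fin d) (Fin m) ℤ) :
    ∀ n : ℕ, ∀ s ∈ Sset A, mu s = n →
      ∃ l : List ((Fin m → ℕ) × (Fin m → ℕ)), (∀ g ∈ l, g ∈ MinS A) ∧ l.sum = s := by
  intro n
  induction n using Nat.strong_induction_on with
  | _ n ih =>
    intro s hs hmu
    by_cases hs0 : s = 0
    · exact ⟨[], by simp, by simp [hs0]⟩
    · set T : Set ((Fin m → ℕ) × (Fin m → ℕ)) := {t | t ∈ Sset A ∧ t ≠ 0 ∧ t ≤ s} with hT
      have hTne : T.Nonempty := ⟨s, hs, hs0, le_refl s⟩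
      have hTwf : T.IsWF := (isPWO_all T).isWF
      set g := hTwf.min hTne with hg
      have hgT : g ∈ T := hTwf.min_mem hTne
      have hgMin : g ∈ MinS A := by
        refine ⟨hgT.1, hgT.2.1, fun t ht ht0 hlt => ?_⟩
        exact hTwf.not_lt_min hTne ⟨ht, ht0, hlt.le.trans hgT.2.2⟩ hlt
      have hsub : s - g ∈ Sset A := mem_sub hs hgT.1 hgT.2.2
      have hmug : 0 < mu g := by
        rcases Nat.eq_zero_or_pos (mu g) with h | h
        · exact absurd (mu_eq_zero h) hgT.2.1
        · exact h
      have hlt : mu (s - g) < n := by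
        have := mu_sub_add hgT.2.2
        omega
      obtain ⟨l, hl, hlsum⟩ := ih (mu (s - g)) hlt (s - g) hsub rfl
      refine ⟨g :: l, ?_, ?_⟩
      · intro x hx
        rcases List.mem_cons.1 hx with h | h
        · exact h ▸ hgMin
        · exact hl x h
      · rw [List.sum_cons, hlsum]
        ext j
        · exact Nat.add_sub_cancel' (hgT.2.2.1 j)
        · exact Nat.add_sub_cancel' (hgT.2.2.2 j)

end Stmt11

open Stmt11 in
theorem stmt_11 {d m : ℕ} (A : Matrix (Fin d) (Fin m) ℤ) :
    ∃ M : Finset (Fin m → ℤ),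
      (∀ z ∈ M, A.mulVec z = 0) ∧
      ∀ u v : Fin m → ℤ, (∀ j, 0 ≤ u j) → (∀ j, 0 ≤ v j) →
        A.mulVec u = A.mulVec v →
        ∃ (k : ℕ) (w : ℕ → Fin m → ℤ),
          w 0 = u ∧ w k = v ∧
          (∀ i ≤ k, ∀ j, 0 ≤ w i j) ∧
          ∀ i < k, (w (i + 1) - w i ∈ M ∨ -(w (i + 1) - w i) ∈ M) := by
  classical
  refine ⟨(minS_finite A).toFinset.image (fun g => zc g.2 - zc g.1), ?_, ?_⟩
  · intro z hz
    simp only [Finset.mem_image, Set.Finite.mem_toFinset] at hz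
    obtain ⟨g, hg, rfl⟩ := hz
    rw [Matrix.mulVec_sub, hg.1, sub_self]
  · intro u v hu hv huv
    set u' : Fin m → ℕ := fun j => (u j).toNat with hu'
    set v' : Fin m → ℕ := fun j => (v j).toNat with hv'
    have hcu : zc u' = u := by funext j; simp [zc, hu', Int.toNat_of_nonneg (hu j)]
    have hcv : zc v' = v := by funext j; simp [zc, hv', Int.toNat_of_nonneg (hv j)]
    have hmem : (u', v') ∈ Sset A := by
      show A.mulVec (zc u') = A.mulVec (zc v')
      rw [hcu, hcv]; exact huv
    obtain ⟨l, hl, hlsum⟩ := decomp A (mu (u', v')) (u', v') hmem rfl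
    set k := l.length with hk
    set w : ℕ → Fin m → ℤ := fun i =>
      zc ((l.take i).map Prod.snd).sum + zc ((l.drop i).map Prod.fst).sum with hw
    have hsum_fst : ((l.map Prod.fst).sum) = u' := by
      have h := map_list_sum (AddMonoidHom.fst (Fin m → ℕ) (Fin m → ℕ)) l
      simp only [AddMonoidHom.coe_fst] at h
      rw [← h, hlsum]
    have hsum_snd : ((l.map Prod.snd).sum) = v' := by
      have h := map_list_sum (AddMonoidHom.snd (Fin m → ℕ) (Fin m → ℕ)) l
      simp only [AddMonoidHom.coe_snd] at h
      rw [← h, hlsum]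
    refine ⟨k, w, ?_, ?_, ?_, ?_⟩
    · simp only [hw, List.take_zero, List.drop_zero, List.map_nil, List.sum_nil, zc_zero,
        zero_add]
      rw [hsum_fst, hcu]
    · simp only [hw, hk, List.take_length, List.drop_length, List.map_nil, List.sum_nil,
        zc_zero, add_zero]
      rw [hsum_snd, hcv]
    · intro i _ j
      show 0 ≤ zc _ j + zc _ j
      exact add_nonneg (Int.ofNat_nonneg _) (Int.ofNat_nonneg _)
    · intro i hi
      left
      have hi' : i < l.length := hi
      have hgi : l[i] ∈ MinS A := hl _ (List.getElem_mem hi')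
      have htake : l.take (i + 1) = l.take i ++ [l[i]] := (List.take_concat_get' l i hi').symm
      have hdrop : l.drop i = l[i] :: l.drop (i + 1) := List.drop_eq_getElem_cons hi'
      have hdiff : w (i + 1) - w i = zc l[i].2 - zc l[i].1 := by
        simp only [hw, htake, hdrop, List.map_append, List.map_cons, List.map_nil,
          List.sum_append, List.sum_cons, List.sum_nil, zc_add, zc_zero]
        abel
      rw [hdiff]
      simp only [Finset.mem_image, Set.Finite.mem_toFinset]
      exact ⟨l[i], hgi, rfl⟩
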